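/- Komlós-type lemma: Let (X_n) be a sequence of [0,∞)-valued random variables on a probability space. Then there exists a sequence X̃_n with X̃_n ∈ conv{X_n, X_{n+1}, ...} (finite convex combinations) such that X̃_n converges almost surely to a [0,∞]-valued random variable. -/

import Mathlib

open MeasureTheory Filter

section KomlosAux

variable {Ω : Type*} [MeasureSpace Ω] [IsProbabilityMeasure (volume : Measure Ω)]

private lemma komlos_integrable_of_bounds {g : Ω → ℝ} (hg : Measurable g)
    (h0 : ∀ ω, 0 ≤ g ω) (h1 : ∀ ω, g ω ≤ 1) : Integrable g := by
  refine (integrable_const (1:ℝ)).mono hg.aestronglyMeasurable ?_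
  filter_upwards with ω
  rw [Real.norm_eq_abs, abs_of_nonneg (h0 ω), norm_one]
  exact h1 ω

private lemma komlos_abs_le (x t : ℝ) (htpos : 0 < t) :
    |x| ≤ (t * x ^ 2 + 1 / t) / 2 := by
  have key : 0 ≤ (t * |x| - 1) ^ 2 := sq_nonneg _
  have habs2 : t ^ 2 * |x| ^ 2 = t ^ 2 * x ^ 2 := by rw [sq_abs]
  have h1t : t * (1 / t) = 1 := mul_one_div_cancel htpos.ne'
  rw [le_div_iff₀ (by norm_num : (0:ℝ) < 2), ← mul_le_mul_iff_of_pos_right htpos]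
  nlinarith [key, habs2, h1t]

private lemma komlos_sum_extend (s u : Finset ℕ) (a F : ℕ → ℝ) (h : s ⊆ u) :
    ∑ m ∈ u, (if m ∈ s then a m else 0) * F m = ∑ m ∈ s, a m * F m := by
  rw [← Finset.sum_subset h (fun x _ hx => by simp [hx])]
  exact Finset.sum_congr rfl fun x hx => by simp [hx]

end KomlosAux

/-- Komlós-type lemma: for any sequence of `[0,∞)`-valued random
variables `X_n` there are finite convex combinations `X̃_n ∈ conv{X_n, X_{n+1}, …}`
converging almost surely to a `[0,∞]`-valued random variable. -/
theorem komlos_type_lemma {Ω : Type*} [MeasureSpace Ω]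
    [IsProbabilityMeasure (volume : Measure Ω)]
    (X : ℕ → Ω → ℝ) (hXmeas : ∀ n, Measurable (X n)) (hXnn : ∀ n ω, 0 ≤ X n ω) :
    ∃ Y : ℕ → Ω → ℝ,
      (∀ n, ∃ (s : Finset ℕ) (a : ℕ → ℝ), (∀ m ∈ s, n ≤ m) ∧ (∀ m, 0 ≤ a m) ∧
        (∑ m ∈ s, a m) = 1 ∧ Y n = fun ω => ∑ m ∈ s, a m * X m ω) ∧
      ∃ Ylim : Ω → ENNReal, Measurable Ylim ∧
        ∀ᵐ ω, Tendsto (fun n => ENNReal.ofReal (Y n ω)) atTop (nhds (Ylim ω)) := by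
  classical
  -- The convex tail classes
  set C : ℕ → Set (Ω → ℝ) := fun n => {f | ∃ s : Finset ℕ, ∃ a : ℕ → ℝ,
    (∀ m ∈ s, n ≤ m) ∧ (∀ m, 0 ≤ a m) ∧ (∑ m ∈ s, a m) = 1 ∧
    f = fun ω => ∑ m ∈ s, a m * X m ω} with hCdef
  have hmemX : ∀ n, X n ∈ C n := by
    intro n
    refine ⟨{n}, fun _ => 1, ?_, fun _ => zero_le_one, by simp, ?_⟩
    · intro m hm; simp at hm; omega
    · funext ω; simp
  have hCne : ∀ n, (C n).Nonempty := fun n => ⟨X n, hmemX n⟩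
  have hCmeas : ∀ n f, f ∈ C n → Measurable f := by
    rintro n f ⟨s, a, -, -, -, rfl⟩
    exact Finset.measurable_sum s fun m _ => (hXmeas m).const_mul _
  have hCnn : ∀ n f, f ∈ C n → ∀ ω, 0 ≤ f ω := by
    rintro n f ⟨s, a, -, ha, -, rfl⟩ ω
    exact Finset.sum_nonneg fun m _ => mul_nonneg (ha m) (hXnn m ω)
  have hCanti : ∀ {n m : ℕ}, n ≤ m → C m ⊆ C n := by
    rintro n m hnm f ⟨s, a, hs, ha, hsum, rfl⟩
    exact ⟨s, a, fun i hi => le_trans hnm (hs i hi), ha, hsum, rfl⟩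
  have hCmid : ∀ n f g, f ∈ C n → g ∈ C n →
      (fun ω => (f ω + g ω) / 2) ∈ C n := by
    rintro n f g ⟨s, a, hs, ha, hsa, rfl⟩ ⟨t, b, ht, hb, hsb, rfl⟩
    refine ⟨s ∪ t, fun m => (if m ∈ s then a m else 0) / 2 +
      (if m ∈ t then b m else 0) / 2, ?_, ?_, ?_, ?_⟩
    · intro m hm
      rcases Finset.mem_union.1 hm with hm | hm
      · exact hs m hm
      · exact ht m hm
    · intro m
      have h1 : 0 ≤ (if m ∈ s then a m else 0) := by
        split_ifs with hm; exacts [ha m, le_rfl]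
      have h2 : 0 ≤ (if m ∈ t then b m else 0) := by
        split_ifs with hm; exacts [hb m, le_rfl]
      exact add_nonneg (div_nonneg h1 two_pos.le) (div_nonneg h2 two_pos.le)
    · have e1 : ∑ m ∈ s ∪ t, (if m ∈ s then a m else 0) = 1 := by
        have := komlos_sum_extend s (s ∪ t) a (fun _ => 1) Finset.subset_union_left
        simpa [hsa] using this
      have e2 : ∑ m ∈ s ∪ t, (if m ∈ t then b m else 0) = 1 := by
        have := komlos_sum_extend t (s ∪ t) b (fun _ => 1) Finset.subset_union_right
        simpa [hsb] using this
      rw [Finset.sum_add_distrib, ← Finset.sum_div, ← Finset.sum_div, e1, e2]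
      norm_num
    · funext ω
      have e1 : ∑ m ∈ s ∪ t, (if m ∈ s then a m else 0) * X m ω
          = ∑ m ∈ s, a m * X m ω :=
        komlos_sum_extend s (s ∪ t) a (fun m => X m ω) Finset.subset_union_left
      have e2 : ∑ m ∈ s ∪ t, (if m ∈ t then b m else 0) * X m ω
          = ∑ m ∈ t, b m * X m ω :=
        komlos_sum_extend t (s ∪ t) b (fun m => X m ω) Finset.subset_union_right
      have expand : ∀ m ∈ s ∪ t,
          ((if m ∈ s then a m else 0) / 2 + (if m ∈ t then b m else 0) / 2) * X m ω
          = (if m ∈ s then a m else 0) * X m ω / 2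
            + (if m ∈ t then b m else 0) * X m ω / 2 := by
        intro m _; ring
      rw [Finset.sum_congr rfl expand, Finset.sum_add_distrib,
        ← Finset.sum_div, ← Finset.sum_div, e1, e2]
      dsimp only
      ring
  -- The functional E and the infima β
  set E : (Ω → ℝ) → ℝ := fun f => ∫ ω, Real.exp (-f ω) with hEdef
  have hexp_meas : ∀ n f, f ∈ C n → Measurable fun ω => Real.exp (-f ω) := by
    intro n f hf
    exact (Real.measurable_exp.comp (hCmeas n f hf).neg)
  have hexp_le_one : ∀ n f, f ∈ C n → ∀ ω, Real.exp (-f ω) ≤ 1 := by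
    intro n f hf ω
    exact Real.exp_le_one_iff.2 (neg_nonpos.2 (hCnn n f hf ω))
  have hEint : ∀ n f, f ∈ C n → Integrable fun ω => Real.exp (-f ω) := by
    intro n f hf
    exact komlos_integrable_of_bounds (hexp_meas n f hf)
      (fun ω => (Real.exp_pos _).le) (hexp_le_one n f hf)
  have hEnn : ∀ f : Ω → ℝ, 0 ≤ E f := fun f =>
    integral_nonneg fun ω => (Real.exp_pos _).le
  set β : ℕ → ℝ := fun n => sInf (E '' C n) with hβdef
  have hβbdd : ∀ n, BddBelow (E '' C n) := by
    rintro n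
    exact ⟨0, by rintro x ⟨f, -, rfl⟩; exact hEnn f⟩
  have hβ1 : ∀ n, β n ≤ 1 := by
    intro n
    have h1 : β n ≤ E (X n) := csInf_le (hβbdd n) ⟨X n, hmemX n, rfl⟩
    have h2 : E (X n) ≤ 1 := by
      have := integral_mono (hEint n (X n) (hmemX n)) (integrable_const (1:ℝ))
        (fun ω => hexp_le_one n (X n) (hmemX n) ω)
      simpa using this
    linarith
  have hβmono : Monotone β := by
    intro n m hnm
    exact csInf_le_csInf (hβbdd n) ((hCne m).image E) (Set.image_mono (f := E) (hCanti hnm))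
  set b : ℝ := ⨆ n, β n with hbdef
  have hβrange : BddAbove (Set.range β) := ⟨1, by rintro x ⟨n, rfl⟩; exact hβ1 n⟩
  have hβleb : ∀ n, β n ≤ b := fun n => le_ciSup hβrange n
  have hβtendsto : Tendsto β atTop (nhds b) := tendsto_atTop_ciSup hβmono hβrange
  -- near-optimal elements
  have hex : ∀ n, ∃ g, g ∈ C n ∧ E g < β n + 1 / (n + 1) := by
    intro n
    obtain ⟨x, hx, hlt⟩ := Real.lt_sInf_add_pos ((hCne n).image E)
      (by positivity : (0:ℝ) < 1 / (n + 1))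
    obtain ⟨g, hg, rfl⟩ := hx
    exact ⟨g, hg, hlt⟩
  choose f hfC hfE using hex
  set h : ℕ → Ω → ℝ := fun n ω => Real.exp (-(f n ω) / 2) with hhdef
  have hh_pos : ∀ n ω, 0 < h n ω := fun n ω => Real.exp_pos _
  have hh_le_one : ∀ n ω, h n ω ≤ 1 := fun n ω =>
    Real.exp_le_one_iff.2 (by have := hCnn n (f n) (hfC n) ω; linarith)
  have hh_meas : ∀ n, Measurable (h n) := fun n =>
    Real.measurable_exp.comp ((hCmeas n (f n) (hfC n)).neg.div_const 2)
  have hh_sq : ∀ n ω, h n ω ^ 2 = Real.exp (-(f n ω)) := by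
    intro n ω
    rw [hhdef]
    rw [sq, ← Real.exp_add]
    ring_nf
  have hh_mul : ∀ n m ω, h n ω * h m ω = Real.exp (-((f n ω + f m ω) / 2)) := by
    intro n m ω
    rw [hhdef, ← Real.exp_add]
    ring_nf
  -- The key quadratic estimate
  have hprod_int : ∀ n m, Integrable fun ω => h n ω * h m ω := by
    intro n m
    exact komlos_integrable_of_bounds ((hh_meas n).mul (hh_meas m))
      (fun ω => mul_nonneg (hh_pos n ω).le (hh_pos m ω).le)
      (fun ω => mul_le_one₀ (hh_le_one n ω) (hh_pos m ω).le (hh_le_one m ω))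
  have Dkey : ∀ n m : ℕ, (∫ ω, (h n ω - h m ω) ^ 2) ≤
      (b + 1 / (n + 1)) + (b + 1 / (m + 1)) - 2 * β (min n m) := by
    intro n m
    have hmid : (fun ω => (f n ω + f m ω) / 2) ∈ C (min n m) :=
      hCmid _ _ _ (hCanti (min_le_left n m) (hfC n)) (hCanti (min_le_right n m) (hfC m))
    have hlow : β (min n m) ≤ ∫ ω, h n ω * h m ω := by
      have h1 : β (min n m) ≤ E (fun ω => (f n ω + f m ω) / 2) :=
        csInf_le (hβbdd _) ⟨_, hmid, rfl⟩
      have h2 : E (fun ω => (f n ω + f m ω) / 2) = ∫ ω, h n ω * h m ω := by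
        rw [hEdef]
        exact integral_congr_ae (Filter.Eventually.of_forall fun ω => (hh_mul n m ω).symm)
      rw [h2] at h1; exact h1
    have hident : (∫ ω, (h n ω - h m ω) ^ 2)
        = E (f n) + E (f m) - 2 * ∫ ω, h n ω * h m ω := by
      have hpt : ∀ ω, (h n ω - h m ω) ^ 2
          = Real.exp (-(f n ω)) + Real.exp (-(f m ω)) - 2 * (h n ω * h m ω) := by
        intro ω
        rw [← hh_sq n ω, ← hh_sq m ω]; ring
      have I1 : Integrable (fun ω => Real.exp (-(f n ω))) := by
        exact hEint n (f n) (hfC n)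
      have I2 : Integrable (fun ω => Real.exp (-(f m ω))) := by
        exact hEint m (f m) (hfC m)
      have I12 : Integrable (fun ω => Real.exp (-(f n ω)) + Real.exp (-(f m ω))) := by
        exact I1.add I2
      have I3 : Integrable (fun ω => 2 * (h n ω * h m ω)) := by
        exact (hprod_int n m).const_mul 2
      rw [integral_congr_ae (Filter.Eventually.of_forall hpt)]
      rw [integral_sub I12 I3, integral_add I1 I2, integral_const_mul]
    have h1 : E (f n) < β n + 1 / (n + 1) := hfE n
    have h2 : E (f m) < β m + 1 / (m + 1) := hfE m
    have h3 := hβleb n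
    have h4 := hβleb m
    rw [hident]
    linarith
  -- choice of cutoffs
  have hsmall : ∀ j : ℕ, ∃ N : ℕ, ∀ n, N ≤ n → ∀ m, N ≤ m →
      (∫ ω, (h n ω - h m ω) ^ 2) ≤ (1/4 : ℝ) ^ j := by
    intro j
    set ε : ℝ := (1/4 : ℝ) ^ j with hε
    have hεpos : 0 < ε := by positivity
    have ev1 : ∀ᶠ n in atTop, b - ε / 4 < β n :=
      hβtendsto.eventually (eventually_gt_nhds (by linarith))
    have ev2 : ∀ᶠ n : ℕ in atTop, (1 : ℝ) / (n + 1) < ε / 4 :=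
      tendsto_one_div_add_atTop_nhds_zero_nat.eventually
        (eventually_lt_nhds (by linarith))
    obtain ⟨N, hN⟩ := (ev1.and ev2).exists_forall_of_atTop
    refine ⟨N, fun n hn m hm => ?_⟩
    have hβN : b - ε / 4 < β (min n m) := by
      have := (hN N le_rfl).1
      have hmono := hβmono (le_min hn hm)
      linarith
    have h1 : (1 : ℝ) / (n + 1) < ε / 4 := (hN n hn).2
    have h2 : (1 : ℝ) / (m + 1) < ε / 4 := (hN m hm).2
    have := Dkey n m
    linarith
  choose N hN using hsmall
  -- the subsequence
  set k : ℕ → ℕ := fun j => Nat.rec (N 0) (fun i ki => max (ki + 1) (N (i + 1))) j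
    with hkdef
  have hk0 : k 0 = N 0 := rfl
  have hksucc : ∀ j, k (j + 1) = max (k j + 1) (N (j + 1)) := fun j => rfl
  have hkN : ∀ j, N j ≤ k j := by
    intro j
    cases j with
    | zero => exact le_of_eq hk0.symm
    | succ i => rw [hksucc]; exact le_max_right _ _
  have hkmono : ∀ j, k j < k (j + 1) := by
    intro j
    rw [hksucc]
    exact lt_of_lt_of_le (Nat.lt_succ_self _) (le_max_left _ _)
  have hkge : ∀ j, j ≤ k j := by
    intro j
    induction j with
    | zero => exact Nat.zero_le _
    | succ i ih => exact lt_of_le_of_lt ih (hkmono i)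
  -- consecutive differences
  set d : ℕ → Ω → ℝ := fun j ω => h (k (j + 1)) ω - h (k j) ω with hddef
  have hd_meas : ∀ j, Measurable (d j) := fun j =>
    (hh_meas (k (j + 1))).sub (hh_meas (k j))
  have hd_abs_le : ∀ j ω, |d j ω| ≤ 2 := by
    intro j ω
    rw [hddef]
    have h1 := hh_pos (k (j+1)) ω
    have h2 := hh_pos (k j) ω
    have h3 := hh_le_one (k (j+1)) ω
    have h4 := hh_le_one (k j) ω
    rw [abs_le]; constructor <;> simp only [] <;> nlinarith
  have hd2 : ∀ j, (∫ ω, (d j ω) ^ 2) ≤ (1/4 : ℝ) ^ j := by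
    intro j
    have h1 : N j ≤ k (j + 1) := le_trans (hkN j) (hkmono j).le
    exact hN j (k (j + 1)) h1 (k j) (hkN j)
  have hh_int : ∀ n, Integrable (h n) := fun n =>
    komlos_integrable_of_bounds (hh_meas n) (fun ω => (hh_pos n ω).le) (hh_le_one n)
  have hd_int : ∀ j, Integrable (d j) := fun j =>
    (hh_int (k (j + 1))).sub (hh_int (k j))
  have hd2_int : ∀ j, Integrable fun ω => (d j ω) ^ 2 := by
    intro j
    refine (integrable_const (4:ℝ)).mono
      ((hd_meas j).pow_const 2).aestronglyMeasurable ?_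
    filter_upwards with ω
    rw [Real.norm_eq_abs, abs_of_nonneg (sq_nonneg _)]
    have := hd_abs_le j ω
    have h4 : ‖(4:ℝ)‖ = 4 := by norm_num
    rw [h4]
    nlinarith [sq_abs (d j ω), abs_nonneg (d j ω)]
  have habs_int : ∀ j, Integrable fun ω => |d j ω| := fun j => (hd_int j).abs
  have hd1 : ∀ j, (∫ ω, |d j ω|) ≤ (1/2 : ℝ) ^ j := by
    intro j
    set t : ℝ := (2 : ℝ) ^ j with ht
    have htpos : 0 < t := by positivity
    have hpt : ∀ ω, |d j ω| ≤ (t * (d j ω) ^ 2 + 1 / t) / 2 := fun ω =>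
      komlos_abs_le (d j ω) t htpos
    have hRint : Integrable fun ω => (t * (d j ω) ^ 2 + 1 / t) / 2 :=
      (((hd2_int j).const_mul t).add (integrable_const _)).div_const 2
    have step1 : (∫ ω, |d j ω|) ≤ ∫ ω, (t * (d j ω) ^ 2 + 1 / t) / 2 :=
      integral_mono (habs_int j) hRint hpt
    have It : Integrable (fun ω => t * (d j ω) ^ 2) := by
      exact (hd2_int j).const_mul t
    have step2 : (∫ ω, (t * (d j ω) ^ 2 + 1 / t) / 2)
        = (t * (∫ ω, (d j ω) ^ 2) + 1 / t) / 2 := by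
      rw [integral_div, integral_add It (integrable_const _),
        integral_const_mul, integral_const]
      simp [measure_univ]
    rw [step2] at step1
    have hbound : t * (∫ ω, (d j ω) ^ 2) ≤ (1/2 : ℝ) ^ j := by
      have := hd2 j
      calc t * (∫ ω, (d j ω) ^ 2) ≤ t * (1/4 : ℝ) ^ j := by
            exact mul_le_mul_of_nonneg_left this htpos.le
        _ = (1/2 : ℝ) ^ j := by
            rw [ht, ← mul_pow]; norm_num
    have hinv : 1 / t = (1/2 : ℝ) ^ j := by
      rw [ht, one_div, ← inv_pow]; norm_num
    calc (∫ ω, |d j ω|) ≤ (t * (∫ ω, (d j ω) ^ 2) + 1 / t) / 2 := step1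
      _ ≤ ((1/2:ℝ)^j + (1/2:ℝ)^j) / 2 := by rw [hinv]; linarith
      _ = (1/2:ℝ)^j := by ring
  -- almost-everywhere summability of the differences
  have hG_lint : ∀ j, (∫⁻ ω, ENNReal.ofReal |d j ω|) ≤ ENNReal.ofReal ((1/2:ℝ)^j) := by
    intro j
    rw [← ofReal_integral_eq_lintegral_ofReal (habs_int j)
      (Filter.Eventually.of_forall fun ω => abs_nonneg _)]
    exact ENNReal.ofReal_le_ofReal (hd1 j)
  have htsum_fin : (∑' j, ∫⁻ ω, ENNReal.ofReal |d j ω|) < ⊤ := by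
    have hsummable : Summable (fun j : ℕ => (1/2:ℝ)^j) :=
      summable_geometric_of_lt_one (by norm_num) (by norm_num)
    calc (∑' j, ∫⁻ ω, ENNReal.ofReal |d j ω|)
        ≤ ∑' j, ENNReal.ofReal ((1/2:ℝ)^j) := ENNReal.tsum_le_tsum hG_lint
      _ = ENNReal.ofReal (∑' j, (1/2:ℝ)^j) :=
          (ENNReal.ofReal_tsum_of_nonneg (fun j => by positivity) hsummable).symm
      _ < ⊤ := ENNReal.ofReal_lt_top
  have hae_sum : ∀ᵐ ω, (∑' j, ENNReal.ofReal |d j ω|) < ⊤ := by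
    apply ae_lt_top (Measurable.ennreal_tsum fun j =>
      ENNReal.measurable_ofReal.comp (hd_meas j).abs)
    rw [lintegral_tsum fun j =>
      (ENNReal.measurable_ofReal.comp (hd_meas j).abs).aemeasurable]
    exact htsum_fin.ne
  have hae_conv : ∀ᵐ ω, ∃ L : ℝ, Tendsto (fun j => h (k j) ω) atTop (nhds L) := by
    filter_upwards [hae_sum] with ω hω
    have hsum : Summable fun j => |d j ω| := by
      have := ENNReal.summable_toReal hω.ne
      refine this.congr fun j => ?_
      exact ENNReal.toReal_ofReal (abs_nonneg _)
    have hcauchy : CauchySeq fun j => h (k j) ω := by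
      refine cauchySeq_of_dist_le_of_summable (fun j => |d j ω|) ?_ hsum
      intro j
      rw [Real.dist_eq, hddef, abs_sub_comm]
    exact cauchySeq_tendsto_of_complete hcauchy
  -- Assemble the answer
  refine ⟨fun n => f (k n), ?_, ?_⟩
  · intro n
    obtain ⟨s, a, hs, ha, hsum, heq⟩ := hfC (k n)
    exact ⟨s, a, fun m hm => le_trans (hkge n) (hs m hm), ha, hsum, heq⟩
  · refine ⟨fun ω => limsup (fun j => ENNReal.ofReal (f (k j) ω)) atTop, ?_, ?_⟩
    · exact Measurable.limsup fun j =>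
        ENNReal.measurable_ofReal.comp (hCmeas _ _ (hfC (k j)))
    · filter_upwards [hae_conv] with ω hω
      obtain ⟨L, hL⟩ := hω
      have hL0 : 0 ≤ L := ge_of_tendsto' hL fun j => (hh_pos (k j) ω).le
      have hfrepr : ∀ j, f (k j) ω = -2 * Real.log (h (k j) ω) := by
        intro j
        rw [hhdef]
        simp only [Real.log_exp]
        ring
      have key : ∃ T : ENNReal,
          Tendsto (fun j => ENNReal.ofReal (f (k j) ω)) atTop (nhds T) := by
        rcases eq_or_lt_of_le hL0 with hL0' | hLpos
        · -- L = 0 : the limit is ∞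
          refine ⟨⊤, ?_⟩
          have hin : Tendsto (fun j => h (k j) ω) atTop (nhdsWithin 0 (Set.Ioi 0)) := by
            refine tendsto_nhdsWithin_of_tendsto_nhds_of_eventually_within _ ?_ ?_
            · rw [hL0']; exact hL
            · exact Filter.Eventually.of_forall fun j => hh_pos (k j) ω
          have hlog : Tendsto (fun j => Real.log (h (k j) ω)) atTop atBot :=
            Real.tendsto_log_nhdsGT_zero.comp hin
          have hneg : Tendsto (fun j => -Real.log (h (k j) ω)) atTop atTop :=
            tendsto_neg_atTop_iff.mpr hlog
          have hf : Tendsto (fun j => f (k j) ω) atTop atTop := by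
            have := hneg.const_mul_atTop (by norm_num : (0:ℝ) < 2)
            refine this.congr fun j => ?_
            rw [hfrepr j]; ring
          exact ENNReal.tendsto_ofReal_atTop.comp hf
        · -- L > 0 : the limit is ofReal (-2 log L)
          refine ⟨ENNReal.ofReal (-2 * Real.log L), ?_⟩
          have hlog : Tendsto (fun j => Real.log (h (k j) ω)) atTop (nhds (Real.log L)) :=
            ((Real.continuousAt_log hLpos.ne').tendsto).comp hL
          have hf : Tendsto (fun j => f (k j) ω) atTop (nhds (-2 * Real.log L)) := by
            have := hlog.const_mul (-2 : ℝ)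
            refine this.congr fun j => (hfrepr j).symm
          exact (ENNReal.continuous_ofReal.tendsto _).comp hf
      obtain ⟨T, hT⟩ := key
      rw [hT.limsup_eq]
      exact hT
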